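/- For n ≥ 2, m ≥ 0, 1 ≤ s ≤ n-1, the n×n matrix with entries Ã_{ij}(n,m,s) defined by Ã_{ij} = (1/2)·binomial(n+m-i, m+i-j+1) + binomial(n+m-i, m+i-j) for i ≠ s, and Ã_{sj} = binomial(n+m-s+1, m+s-j), satisfies: row n of Ã equals the unit vector e_n (i.e., Ã_{nj} = 1 if j = n and 0 otherwise), and det_{1≤i,j≤n}(Ã_{ij}(n,m,s)) = det_{1≤i,j≤n-1}(A_{ij}(n-1,m+1,s-1)), where A_{ij}(n,m,s) = (1/2)·binomial(n+m-i, m+i-j) + binomial(n+m-i, m+i-1-j) for i ≠ s+1 and A_{s+1,j}(n,m,s) = binomial(n+m-s, m+s-j). -/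

import Mathlib

/-- Binomial coefficient `binomial a b` for integer lower index, zero when
`b < 0` (and, via `Nat.choose`, when `b > a`). -/
def cb (a : ℕ) (b : ℤ) : ℚ := if 0 ≤ b then (Nat.choose a b.toNat : ℚ) else 0

/-- The even-case entries (`1`-based indices `i, j`):
`A_{ij}(n,m,s) = (1/2)·C(n+m-i, m+i-j) + C(n+m-i, m+i-1-j)` for `i ≠ s+1`,
`A_{s+1,j}(n,m,s) = C(n+m-s, m+s-j)`. -/
def Aent (n m s i j : ℕ) : ℚ :=
  if i = s + 1 then cb (n + m - s) ((m : ℤ) + s - j)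
  else (1 / 2 : ℚ) * cb (n + m - i) ((m : ℤ) + i - j) + cb (n + m - i) ((m : ℤ) + i - 1 - j)

/-- The odd-case entries (`1`-based indices `i, j`):
`Ã_{ij}(n,m,s) = (1/2)·C(n+m-i, m+i-j+1) + C(n+m-i, m+i-j)` for `i ≠ s`,
`Ã_{sj}(n,m,s) = C(n+m-s+1, m+s-j)`. -/
def Atil (n m s i j : ℕ) : ℚ :=
  if i = s then cb (n + m - s + 1) ((m : ℤ) + s - j)
  else (1 / 2 : ℚ) * cb (n + m - i) ((m : ℤ) + i - j + 1) + cb (n + m - i) ((m : ℤ) + i - j)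

lemma cb_eq_zero {a : ℕ} {b : ℤ} (h : (a : ℤ) < b) : cb a b = 0 := by
  unfold cb
  split
  · next hb => rw [Nat.choose_eq_zero_of_lt (by omega)]; simp
  · rfl

lemma cb_self (a : ℕ) : cb a (a : ℤ) = 1 := by
  unfold cb
  rw [if_pos (by positivity)]
  simp

/-- Reduction of the odd-side lower-half determinant to the even-side case:
row `n` of `Ã(n,m,s)` is the unit vector `e_n`, and
`det_{1≤i,j≤n} Ã_{ij}(n,m,s) = det_{1≤i,j≤n-1} A_{ij}(n-1, m+1, s-1)`. -/
theorem odd_det_reduction (n m s : ℕ) (hn : 2 ≤ n) (hs1 : 1 ≤ s) (hs2 : s ≤ n - 1) :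
    (∀ j : Fin n, Atil n m s n (j.1 + 1) = if j.1 + 1 = n then 1 else 0) ∧
    Matrix.det (Matrix.of fun i j : Fin n => Atil n m s (i.1 + 1) (j.1 + 1)) =
      Matrix.det (Matrix.of fun i j : Fin (n - 1) =>
        Aent (n - 1) (m + 1) (s - 1) (i.1 + 1) (j.1 + 1)) := by
  obtain ⟨k, rfl⟩ : ∃ k, n = k + 1 := ⟨n - 1, by omega⟩
  have hsk : s ≤ k := by omega
  have hrow : ∀ j : Fin (k + 1),
      Atil (k + 1) m s (k + 1) (j.1 + 1) = if j.1 + 1 = k + 1 then 1 else 0 := by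
    intro j
    have hj : j.1 ≤ k := by omega
    unfold Atil
    rw [if_neg (by omega)]
    have h1 : (k + 1) + m - (k + 1) = m := by omega
    rw [h1]
    by_cases hj' : j.1 + 1 = k + 1
    · rw [if_pos hj']
      have h2 : (m : ℤ) + ↑(k + 1) - ↑(j.1 + 1) = (m : ℤ) := by push_cast; omega
      rw [h2, cb_eq_zero (by omega), cb_self]
      ring
    · rw [if_neg hj']
      rw [cb_eq_zero (by push_cast; omega), cb_eq_zero (by push_cast; omega)]
      ring
  refine ⟨hrow, ?_⟩
  rw [Matrix.det_succ_row _ (Fin.last k)]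
  rw [Finset.sum_eq_single (Fin.last k)]
  · have hlast : (Matrix.of fun i j : Fin (k + 1) => Atil (k + 1) m s (i.1 + 1) (j.1 + 1))
        (Fin.last k) (Fin.last k) = 1 := by
      have := hrow (Fin.last k)
      simpa using this
    rw [hlast]
    simp only [Fin.val_last, Fin.succAbove_last, mul_one, one_mul]
    rw [show ((-1 : ℚ)) ^ (k + k) = 1 from Even.neg_one_pow ⟨k, rfl⟩, one_mul]
    simp only [Nat.add_sub_cancel]
    congr 1
    ext i j
    simp only [Matrix.submatrix_apply, Matrix.of_apply, Fin.coe_castSucc]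
    unfold Atil Aent
    have hcast : ((s - 1 : ℕ) : ℤ) = (s : ℤ) - 1 := by omega
    by_cases hi : i.1 + 1 = s
    · rw [if_pos hi, if_pos (by omega)]
      have ha : (k + 1) + m - s + 1 = k + (m + 1) - (s - 1) := by omega
      have hb : (m : ℤ) + ↑s - ↑(j.1 + 1) = ((m + 1 : ℕ) : ℤ) + ↑(s - 1) - ↑(j.1 + 1) := by
        push_cast [hcast]; ring
      rw [ha, hb]
    · rw [if_neg hi, if_neg (by omega)]
      have ha : (k + 1) + m - (i.1 + 1) = k + (m + 1) - (i.1 + 1) := by omega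
      have hb : (m : ℤ) + ↑(i.1 + 1) - ↑(j.1 + 1) + 1
          = ((m + 1 : ℕ) : ℤ) + ↑(i.1 + 1) - ↑(j.1 + 1) := by push_cast; ring
      have hc : (m : ℤ) + ↑(i.1 + 1) - ↑(j.1 + 1)
          = ((m + 1 : ℕ) : ℤ) + ↑(i.1 + 1) - 1 - ↑(j.1 + 1) := by push_cast; ring
      rw [ha, hb, hc]
  · intro b _ hb
    have : (Matrix.of fun i j : Fin (k + 1) => Atil (k + 1) m s (i.1 + 1) (j.1 + 1))
        (Fin.last k) b = 0 := by
      have := hrow b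
      have hb' : b.1 + 1 ≠ k + 1 := by
        have := Fin.val_ne_of_ne hb
        simp only [Fin.val_last] at this
        omega
      rw [if_neg hb'] at this
      simpa using this
    rw [this]; ring
  · intro h
    exact absurd (Finset.mem_univ _) h
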